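/- Let (Y_n)_{n≥1} be a sequence of independent and identically distributed random variables that are almost surely positive, with E[Y₁] = 1 and E[exp(θ Y₁)] < ∞ for some θ > 0, and let Y₀ be a nonnegative random variable (on the same probability space) with E[exp(θ' Y₀)] < ∞ for some θ' > 0. Define S_n = Y₀ + Y₁ + ⋯ + Y_n and the counting process Λ(t) = inf{ n ∈ ℕ : S_n > t } for t ≥ 0. Then for every ε ∈ (0, 1/2) there exist constants c < ∞ and δ > 0 such that for all real t ≥ 1: P( |Λ(t) − t| ≥ t^{1/2 + ε} ) ≤ c · exp( −t^{δ} ). -/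

import Mathlib

open MeasureTheory ProbabilityTheory

lemma my_exp_neg_le_quad (x : ℝ) (hx : 0 ≤ x) : Real.exp (-x) ≤ 1 - x + x ^ 2 := by
  have key : Real.exp (-x) * Real.exp x = 1 := by rw [← Real.exp_add]; simp
  nlinarith [Real.add_one_le_exp x, (Real.exp_pos (-x)).le,
    mul_nonneg (Real.exp_pos (-x)).le (sub_nonneg.2 (Real.add_one_le_exp x)),
    mul_nonneg hx (mul_nonneg hx hx)]

lemma my_exp_le_quad (x : ℝ) (hx : 0 ≤ x) : Real.exp x ≤ 1 + x + x ^ 2 * Real.exp x := by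
  rcases le_or_gt 1 x with h | h
  · have h2 : Real.exp x ≤ x ^ 2 * Real.exp x :=
      le_mul_of_one_le_left (Real.exp_pos x).le (by nlinarith)
    linarith
  · have key : Real.exp (-x) * Real.exp x = 1 := by rw [← Real.exp_add]; simp
    have h1 : (1 - x) * Real.exp x ≤ 1 := by
      have := Real.add_one_le_exp (-x)
      nlinarith [(Real.exp_pos x).le]
    nlinarith [(Real.exp_pos x).le, mul_nonneg hx (mul_nonneg hx (Real.exp_pos x).le)]

lemma my_sq_le_exp (z : ℝ) (hz : 0 ≤ z) : z ^ 2 ≤ 4 * Real.exp z := by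
  have h := Real.add_one_le_exp (z / 2)
  have h2 : Real.exp (z / 2) * Real.exp (z / 2) = Real.exp z := by
    rw [← Real.exp_add]; ring_nf
  nlinarith [(Real.exp_pos (z / 2)).le, hz]


set_option maxHeartbeats 1000000 in
/-- stretched-exponential concentration of a delayed renewal
counting process. With `S n = Y 0 + Y 1 + ⋯ + Y n` and
`Λ(t) = inf {n : S n > t}`, where `(Y n)_{n ≥ 1}` are i.i.d., a.s. positive,
with mean `1` and a finite exponential moment, and the delay `Y 0 ≥ 0` has a
finite exponential moment, for every `ε ∈ (0, 1/2)` there are `c < ∞` and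
`δ > 0` such that `P(|Λ(t) − t| ≥ t^{1/2+ε}) ≤ c exp(−t^δ)` for all `t ≥ 1`. -/
theorem renewal_counting_concentration
    {Ω : Type*} [MeasurableSpace Ω] (P : Measure Ω) [IsProbabilityMeasure P]
    (Y : ℕ → Ω → ℝ)
    (hmeas : ∀ n, Measurable (Y n))
    (hindep : iIndepFun (fun n : ℕ => Y (n + 1)) P)
    (hident : ∀ n : ℕ, 1 ≤ n → IdentDistrib (Y n) (Y 1) P P)
    (hpos : ∀ n : ℕ, 1 ≤ n → ∀ᵐ ω ∂P, 0 < Y n ω)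
    (hint : Integrable (Y 1) P)
    (hmean : ∫ ω, Y 1 ω ∂P = 1)
    (hexp : ∃ θ : ℝ, 0 < θ ∧ Integrable (fun ω => Real.exp (θ * Y 1 ω)) P)
    (hY0 : ∀ᵐ ω ∂P, 0 ≤ Y 0 ω)
    (hexp0 : ∃ θ' : ℝ, 0 < θ' ∧ Integrable (fun ω => Real.exp (θ' * Y 0 ω)) P)
    (S : ℕ → Ω → ℝ) (hS : ∀ n ω, S n ω = ∑ i ∈ Finset.range (n + 1), Y i ω)
    (Lam : ℝ → Ω → ℕ) (hLam : ∀ t ω, Lam t ω = sInf {n : ℕ | t < S n ω}) :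
    ∀ ε : ℝ, 0 < ε → ε < 1 / 2 →
      ∃ c : ℝ, ∃ δ : ℝ, 0 < δ ∧ ∀ t : ℝ, 1 ≤ t →
        P {ω | t ^ ((1 : ℝ) / 2 + ε) ≤ |(Lam t ω : ℝ) - t|}
          ≤ ENNReal.ofReal (c * Real.exp (-t ^ δ)) := by
  classical
  intro ε hε hε2
  obtain ⟨θ, hθ, hexpθ⟩ := hexp
  obtain ⟨θ', hθ', hexpθ'⟩ := hexp0
  -- a.e. positivity facts
  have hae : ∀ᵐ ω ∂P, 0 ≤ Y 0 ω ∧ ∀ n, 1 ≤ n → 0 < Y n ω := by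
    refine hY0.and ?_
    rw [MeasureTheory.ae_all_iff]
    intro n
    by_cases hn : 1 ≤ n
    · exact (hpos n hn).mono fun ω h _ => h
    · exact Filter.Eventually.of_forall fun ω h => absurd h hn
  have hY1nn : ∀ᵐ ω ∂P, 0 ≤ Y 1 ω := (hpos 1 le_rfl).mono fun ω h => h.le
  -- integrability of exponential moments of Y 1
  have hint1 : ∀ lam : ℝ, 0 ≤ lam → lam ≤ θ →
      Integrable (fun ω => Real.exp (lam * Y 1 ω)) P := by
    intro lam h0 h1
    refine hexpθ.mono'
      ((Real.measurable_exp.comp ((hmeas 1).const_mul lam)).aestronglyMeasurable) ?_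
    filter_upwards [hY1nn] with ω hω
    rw [Real.norm_eq_abs, Real.abs_exp]
    exact Real.exp_le_exp.2 (mul_le_mul_of_nonneg_right h1 hω)
  have hintneg1 : ∀ lam : ℝ, 0 ≤ lam →
      Integrable (fun ω => Real.exp (-lam * Y 1 ω)) P := by
    intro lam h0
    refine (integrable_const 1).mono'
      ((Real.measurable_exp.comp ((hmeas 1).const_mul (-lam))).aestronglyMeasurable) ?_
    filter_upwards [hY1nn] with ω hω
    rw [Real.norm_eq_abs, Real.abs_exp, ← Real.exp_zero]
    exact Real.exp_le_exp.2 (by linarith only [mul_nonneg h0 hω])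
  -- the key second-moment-type constant
  have hsqexp : Integrable (fun ω => (Y 1 ω) ^ 2 * Real.exp (θ / 2 * Y 1 ω)) P := by
    refine (hexpθ.const_mul (16 / θ ^ 2)).mono'
      ((((hmeas 1).pow_const 2).mul
        (Real.measurable_exp.comp ((hmeas 1).const_mul (θ / 2)))).aestronglyMeasurable) ?_
    filter_upwards [hY1nn] with ω hω
    have hz : (0:ℝ) ≤ θ / 2 * Y 1 ω := by positivity
    have h1 : (θ / 2 * Y 1 ω) ^ 2 ≤ 4 * Real.exp (θ / 2 * Y 1 ω) := my_sq_le_exp _ hz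
    have h2 : (Y 1 ω) ^ 2 ≤ 16 / θ ^ 2 * Real.exp (θ / 2 * Y 1 ω) := by
      rw [div_mul_eq_mul_div, le_div_iff₀ (by positivity : (0:ℝ) < θ ^ 2)]
      nlinarith only [h1]
    have h3 : Real.exp (θ / 2 * Y 1 ω) * Real.exp (θ / 2 * Y 1 ω) = Real.exp (θ * Y 1 ω) := by
      rw [← Real.exp_add]; ring_nf
    rw [Real.norm_eq_abs, abs_of_nonneg (by positivity)]
    calc (Y 1 ω) ^ 2 * Real.exp (θ / 2 * Y 1 ω)
        ≤ (16 / θ ^ 2 * Real.exp (θ / 2 * Y 1 ω)) * Real.exp (θ / 2 * Y 1 ω) :=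
          mul_le_mul_of_nonneg_right h2 (Real.exp_pos _).le
      _ = 16 / θ ^ 2 * Real.exp (θ * Y 1 ω) := by rw [mul_assoc, h3]
  obtain ⟨CC, hCCdef⟩ : ∃ c : ℝ, c = ∫ ω, (Y 1 ω) ^ 2 * Real.exp (θ / 2 * Y 1 ω) ∂P := ⟨_, rfl⟩
  have hCC0 : 0 ≤ CC := by
    rw [hCCdef]; exact integral_nonneg fun ω => by positivity
  -- mgf bounds for Y 1
  have hIcalc : ∀ lam : ℝ,
      ∫ ω, (1 + lam * Y 1 ω + lam ^ 2 * ((Y 1 ω) ^ 2 * Real.exp (θ / 2 * Y 1 ω))) ∂P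
        = 1 + lam + CC * lam ^ 2 := by
    intro lam
    have i1 : Integrable (fun ω => 1 + lam * Y 1 ω) P :=
      (integrable_const 1).add (hint.const_mul lam)
    have i2 : Integrable (fun ω => lam ^ 2 * ((Y 1 ω) ^ 2 * Real.exp (θ / 2 * Y 1 ω))) P :=
      hsqexp.const_mul (lam ^ 2)
    rw [integral_add i1 i2, integral_add (integrable_const 1) (hint.const_mul lam),
      integral_const, integral_const_mul, integral_const_mul, hmean, ← hCCdef]
    simp [mul_comm]
  have hIcalc' : ∀ lam : ℝ,
      ∫ ω, (1 - lam * Y 1 ω + lam ^ 2 * ((Y 1 ω) ^ 2 * Real.exp (θ / 2 * Y 1 ω))) ∂P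
        = 1 - lam + CC * lam ^ 2 := by
    intro lam
    have i1 : Integrable (fun ω => 1 - lam * Y 1 ω) P :=
      (integrable_const 1).sub (hint.const_mul lam)
    have i2 : Integrable (fun ω => lam ^ 2 * ((Y 1 ω) ^ 2 * Real.exp (θ / 2 * Y 1 ω))) P :=
      hsqexp.const_mul (lam ^ 2)
    rw [integral_add i1 i2, integral_sub (integrable_const 1) (hint.const_mul lam),
      integral_const, integral_const_mul, integral_const_mul, hmean, ← hCCdef]
    simp [mul_comm]
  have hmgf_le : ∀ lam : ℝ, 0 ≤ lam → lam ≤ θ / 2 →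
      mgf (Y 1) P lam ≤ Real.exp (lam + CC * lam ^ 2) := by
    intro lam h0 h1
    have hbound : ∀ᵐ ω ∂P, Real.exp (lam * Y 1 ω) ≤
        1 + lam * Y 1 ω + lam ^ 2 * ((Y 1 ω) ^ 2 * Real.exp (θ / 2 * Y 1 ω)) := by
      filter_upwards [hY1nn] with ω hω
      have h2 := my_exp_le_quad (lam * Y 1 ω) (by positivity)
      have h3 : Real.exp (lam * Y 1 ω) ≤ Real.exp (θ / 2 * Y 1 ω) :=
        Real.exp_le_exp.2 (mul_le_mul_of_nonneg_right h1 hω)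
      linarith only [h2,
        mul_le_mul_of_nonneg_left h3 (sq_nonneg (lam * Y 1 ω))]
    have hRHSint : Integrable (fun ω =>
        1 + lam * Y 1 ω + lam ^ 2 * ((Y 1 ω) ^ 2 * Real.exp (θ / 2 * Y 1 ω))) P :=
      ((integrable_const 1).add (hint.const_mul lam)).add (hsqexp.const_mul (lam ^ 2))
    have hI : mgf (Y 1) P lam ≤ 1 + lam + CC * lam ^ 2 := by
      have h4 := integral_mono_ae (hint1 lam h0 (by linarith)) hRHSint hbound
      rw [hIcalc lam] at h4
      exact h4
    calc mgf (Y 1) P lam ≤ 1 + lam + CC * lam ^ 2 := hI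
      _ = 1 + (lam + CC * lam ^ 2) := by ring
      _ ≤ Real.exp (lam + CC * lam ^ 2) := by
          have := Real.add_one_le_exp (lam + CC * lam ^ 2); linarith
  have hmgf_neg : ∀ lam : ℝ, 0 ≤ lam →
      mgf (Y 1) P (-lam) ≤ Real.exp (-lam + CC * lam ^ 2) := by
    intro lam h0
    have hbound : ∀ᵐ ω ∂P, Real.exp (-lam * Y 1 ω) ≤
        1 - lam * Y 1 ω + lam ^ 2 * ((Y 1 ω) ^ 2 * Real.exp (θ / 2 * Y 1 ω)) := by
      filter_upwards [hY1nn] with ω hω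
      have h2 := my_exp_neg_le_quad (lam * Y 1 ω) (by positivity)
      have h3 : (1:ℝ) ≤ Real.exp (θ / 2 * Y 1 ω) := by
        rw [← Real.exp_zero]; exact Real.exp_le_exp.2 (by positivity)
      have h4 : Real.exp (-(lam * Y 1 ω)) = Real.exp (-lam * Y 1 ω) := by ring_nf
      linarith only [h2, h4,
        mul_nonneg (sq_nonneg (lam * Y 1 ω)) (sub_nonneg.2 h3)]
    have hRHSint : Integrable (fun ω =>
        1 - lam * Y 1 ω + lam ^ 2 * ((Y 1 ω) ^ 2 * Real.exp (θ / 2 * Y 1 ω))) P :=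
      ((integrable_const 1).sub (hint.const_mul lam)).add (hsqexp.const_mul (lam ^ 2))
    have hI : mgf (Y 1) P (-lam) ≤ 1 - lam + CC * lam ^ 2 := by
      have h4 := integral_mono_ae (hintneg1 lam h0) hRHSint hbound
      rw [hIcalc' lam] at h4
      exact h4
    calc mgf (Y 1) P (-lam) ≤ 1 - lam + CC * lam ^ 2 := hI
      _ = 1 + (-lam + CC * lam ^ 2) := by ring
      _ ≤ Real.exp (-lam + CC * lam ^ 2) := by
          have := Real.add_one_le_exp (-lam + CC * lam ^ 2); linarith
  -- identical distribution transfers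
  have hident_exp : ∀ i : ℕ, ∀ s : ℝ,
      IdentDistrib (fun ω => Real.exp (s * Y (i + 1) ω)) (fun ω => Real.exp (s * Y 1 ω)) P P :=
    fun i s => (hident (i + 1) (by omega)).comp
      (Real.measurable_exp.comp (measurable_id.const_mul s))
  have hmgf_eq : ∀ i : ℕ, ∀ s : ℝ, mgf (Y (i + 1)) P s = mgf (Y 1) P s := fun i s =>
    (hident_exp i s).integral_eq
  have hint_n : ∀ i : ℕ, ∀ lam : ℝ, 0 ≤ lam → lam ≤ θ →
      Integrable (fun ω => Real.exp (lam * Y (i + 1) ω)) P := fun i lam h0 h1 =>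
    (hident_exp i lam).integrable_iff.2 (hint1 lam h0 h1)
  -- partial sums without the delay
  obtain ⟨Xs, hXsdef⟩ : ∃ X : ℕ → Ω → ℝ,
      X = fun m ω => ∑ i ∈ Finset.range m, Y (i + 1) ω := ⟨_, rfl⟩
  have hXs_eq : ∀ m : ℕ, Xs m = ∑ i ∈ Finset.range m, (fun n : ℕ => Y (n + 1)) i := by
    intro m; rw [hXsdef]; ext ω; rw [Finset.sum_apply]
  have hXs_meas : ∀ m, Measurable (Xs m) := by
    intro m; rw [hXsdef]
    exact Finset.measurable_sum _ fun i _ => hmeas (i + 1)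
  have hmgf_Xs : ∀ m : ℕ, ∀ s : ℝ, mgf (Xs m) P s = (mgf (Y 1) P s) ^ m := by
    intro m s
    rw [hXs_eq m, hindep.mgf_sum (fun i => hmeas (i + 1)) (Finset.range m)]
    rw [Finset.prod_congr rfl fun i _ => hmgf_eq i s, Finset.prod_const, Finset.card_range]
  -- Chernoff bounds
  have hChernU : ∀ m : ℕ, ∀ lam b : ℝ, 0 ≤ lam → lam ≤ θ / 2 →
      (P {ω | b ≤ Xs m ω}).toReal ≤
        Real.exp (-lam * b) * Real.exp ((m : ℝ) * (lam + CC * lam ^ 2)) := by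
    intro m lam b h0 h1
    have hintsum : Integrable (fun ω => Real.exp (lam * Xs m ω)) P := by
      rw [hXs_eq m]
      exact hindep.integrable_exp_mul_sum (fun i => hmeas (i + 1))
        (fun i _ => hint_n i lam h0 (by linarith))
    refine le_trans (measure_ge_le_exp_mul_mgf b h0 hintsum) ?_
    have h2 : mgf (Xs m) P lam ≤ Real.exp ((m : ℝ) * (lam + CC * lam ^ 2)) := by
      rw [hmgf_Xs m lam]
      calc (mgf (Y 1) P lam) ^ m ≤ (Real.exp (lam + CC * lam ^ 2)) ^ m :=
            pow_le_pow_left₀ mgf_nonneg (hmgf_le lam h0 h1) m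
        _ = Real.exp ((m : ℝ) * (lam + CC * lam ^ 2)) := by rw [← Real.exp_nat_mul]
    exact mul_le_mul_of_nonneg_left h2 (Real.exp_pos _).le
  have hXs_nn : ∀ᵐ ω ∂P, ∀ m : ℕ, 0 ≤ Xs m ω := by
    filter_upwards [hae] with ω hω m
    rw [hXsdef]
    exact Finset.sum_nonneg fun i _ => (hω.2 (i + 1) (by omega)).le
  have hChernL : ∀ m : ℕ, ∀ lam b : ℝ, 0 ≤ lam →
      (P {ω | Xs m ω ≤ b}).toReal ≤
        Real.exp (lam * b) * Real.exp ((m : ℝ) * (-lam + CC * lam ^ 2)) := by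
    intro m lam b h0
    have hintsum : Integrable (fun ω => Real.exp (-lam * Xs m ω)) P := by
      refine (integrable_const 1).mono'
        ((Real.measurable_exp.comp ((hXs_meas m).const_mul (-lam))).aestronglyMeasurable) ?_
      filter_upwards [hXs_nn] with ω hω
      rw [Real.norm_eq_abs, Real.abs_exp, ← Real.exp_zero]
      exact Real.exp_le_exp.2 (by linarith only [mul_nonneg h0 (hω m)])
    have h5 := measure_le_le_exp_mul_mgf (μ := P) (X := Xs m) (t := -lam) b
      (neg_nonpos.2 h0) hintsum
    rw [neg_neg] at h5
    refine le_trans h5 ?_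
    have h2 : mgf (Xs m) P (-lam) ≤ Real.exp ((m : ℝ) * (-lam + CC * lam ^ 2)) := by
      rw [hmgf_Xs m (-lam)]
      calc (mgf (Y 1) P (-lam)) ^ m ≤ (Real.exp (-lam + CC * lam ^ 2)) ^ m :=
            pow_le_pow_left₀ mgf_nonneg (hmgf_neg lam h0) m
        _ = Real.exp ((m : ℝ) * (-lam + CC * lam ^ 2)) := by rw [← Real.exp_nat_mul]
    exact mul_le_mul_of_nonneg_left h2 (Real.exp_pos _).le
  -- delay bound
  obtain ⟨C0, hC0def⟩ : ∃ c : ℝ, c = mgf (Y 0) P θ' := ⟨_, rfl⟩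
  have hC00 : 0 ≤ C0 := by rw [hC0def]; exact mgf_nonneg
  have hChernD : ∀ b : ℝ, (P {ω | b ≤ Y 0 ω}).toReal ≤ Real.exp (-θ' * b) * C0 := by
    intro b
    rw [hC0def]
    exact measure_ge_le_exp_mul_mgf b hθ'.le hexpθ'
  -- constants
  obtain ⟨κ, hκdef⟩ : ∃ k : ℝ, k = min (θ / 2) (1 / (4 * (CC + 1))) := ⟨_, rfl⟩
  have hκ : 0 < κ := by
    rw [hκdef]
    exact lt_min (by linarith) (div_pos one_pos (by linarith))
  have hκθ : κ ≤ θ / 2 := by rw [hκdef]; exact min_le_left _ _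
  have hκCC : κ * (CC + 1) ≤ 1 / 4 := by
    have h : κ ≤ 1 / (4 * (CC + 1)) := by
      rw [hκdef]; exact min_le_right _ _
    calc κ * (CC + 1) ≤ 1 / (4 * (CC + 1)) * (CC + 1) :=
          mul_le_mul_of_nonneg_right h (by linarith)
      _ = 1 / 4 := by
          have hne : CC + 1 ≠ 0 := by linarith
          field_simp
  obtain ⟨B₀, hB₀def⟩ : ∃ b : ℝ, b = min (κ / 4) (θ' / 2) := ⟨_, rfl⟩
  have hB₀ : 0 < B₀ := by rw [hB₀def]; exact lt_min (by linarith) (by linarith)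
  have hB₀κ : B₀ ≤ κ / 4 := by rw [hB₀def]; exact min_le_left _ _
  have hB₀θ' : B₀ ≤ θ' / 2 := by rw [hB₀def]; exact min_le_right _ _
  obtain ⟨A₀, hA₀def⟩ : ∃ a : ℝ, a = Real.exp κ + 1 + C0 := ⟨_, rfl⟩
  have hA₀ : 0 < A₀ := by
    rw [hA₀def]; have := Real.exp_pos κ; linarith
  -- the main estimate
  have key : ∀ t : ℝ, 1 ≤ t →
      P {ω | t ^ ((1 : ℝ) / 2 + ε) ≤ |(Lam t ω : ℝ) - t|}
        ≤ ENNReal.ofReal (A₀ * Real.exp (-B₀ * t ^ ε)) := by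
    intro t ht
    have ht0 : (0:ℝ) < t := by linarith
    obtain ⟨a, hadef⟩ : ∃ x : ℝ, x = t ^ ((1 : ℝ) / 2 + ε) := ⟨_, rfl⟩
    have hp0 : (0:ℝ) ≤ 1 / 2 + ε := by linarith
    have ha1 : 1 ≤ a := by
      rw [hadef]
      calc (1:ℝ) = 1 ^ ((1:ℝ) / 2 + ε) := (Real.one_rpow _).symm
        _ ≤ t ^ ((1:ℝ) / 2 + ε) := Real.rpow_le_rpow zero_le_one ht hp0
    have hat : a ≤ t := by
      rw [hadef]
      nth_rewrite 2 [← Real.rpow_one t]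
      exact Real.rpow_le_rpow_of_exponent_le ht (by linarith)
    have hta : t ^ ε ≤ a := by
      rw [hadef]
      exact Real.rpow_le_rpow_of_exponent_le ht (by linarith)
    have htε0 : (0:ℝ) < t ^ ε := Real.rpow_pos_of_pos ht0 ε
    have ht2ε0 : (0:ℝ) < t ^ (2 * ε) := Real.rpow_pos_of_pos ht0 _
    obtain ⟨lam, hlamdef⟩ : ∃ x : ℝ, x = κ * t ^ (ε - 1 / 2) := ⟨_, rfl⟩
    have hlam0 : 0 < lam := by
      rw [hlamdef]; exact mul_pos hκ (Real.rpow_pos_of_pos ht0 _)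
    have hlamκ : lam ≤ κ := by
      have h1 : t ^ (ε - 1 / 2) ≤ 1 :=
        Real.rpow_le_one_of_one_le_of_nonpos ht (by linarith)
      calc lam = κ * t ^ (ε - 1 / 2) := hlamdef
        _ ≤ κ * 1 := mul_le_mul_of_nonneg_left h1 hκ.le
        _ = κ := mul_one κ
    have hlam_a : lam * a = κ * t ^ (2 * ε) := by
      rw [hlamdef, hadef, mul_assoc, ← Real.rpow_add ht0,
        show ε - 1 / 2 + (1 / 2 + ε) = 2 * ε by ring]
    have hlam_sq : lam ^ 2 * t = κ ^ 2 * t ^ (2 * ε) := by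
      have h1 : (t ^ (ε - 1 / 2)) ^ (2:ℕ) = t ^ (2 * ε - 1) := by
        rw [← Real.rpow_natCast (t ^ (ε - 1 / 2)) 2, ← Real.rpow_mul ht0.le]
        norm_num
        rw [show (ε - 1 / 2) * 2 = 2 * ε - 1 by ring]
      have h2 : t ^ (2 * ε - 1) * t = t ^ (2 * ε) := by
        rw [← Real.rpow_add_one ht0.ne', sub_add_cancel]
      rw [hlamdef, mul_pow, mul_assoc, h1, h2]
    have ht2ε : t ^ ε ≤ t ^ (2 * ε) := Real.rpow_le_rpow_of_exponent_le ht (by linarith)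
    -- the index cutoffs
    obtain ⟨m, hmdef⟩ : ∃ k : ℕ, k = ⌈t + a⌉₊ - 1 := ⟨_, rfl⟩
    have hceil1 : 1 ≤ ⌈t + a⌉₊ := Nat.one_le_ceil_iff.2 (by linarith)
    have hmcast : (m : ℝ) = (⌈t + a⌉₊ : ℝ) - 1 := by
      rw [hmdef, Nat.cast_sub hceil1, Nat.cast_one]
    have hm_lb : t + a - 1 ≤ (m : ℝ) := by
      have := Nat.le_ceil (t + a); rw [hmcast]; linarith
    have hm_ub : (m : ℝ) < t + a := by
      have := Nat.ceil_lt_add_one (show (0:ℝ) ≤ t + a by linarith)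
      rw [hmcast]; linarith
    obtain ⟨m', hm'def⟩ : ∃ k : ℕ, k = ⌊t - a⌋₊ := ⟨_, rfl⟩
    have hm'_ub : (m' : ℝ) ≤ t - a := by
      rw [hm'def]; exact Nat.floor_le (by linarith)
    -- event inclusion
    obtain ⟨A, hAdef⟩ : ∃ s : Set Ω, s = {ω | Xs m ω ≤ t} := ⟨_, rfl⟩
    obtain ⟨B, hBdef⟩ : ∃ s : Set Ω, s = {ω | a / 2 ≤ Y 0 ω} := ⟨_, rfl⟩
    obtain ⟨Cs, hCsdef⟩ : ∃ s : Set Ω, s = {ω | t - a / 2 ≤ Xs m' ω} := ⟨_, rfl⟩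
    have hsubset : ∀ᵐ ω ∂P,
        ω ∈ {ω | t ^ ((1 : ℝ) / 2 + ε) ≤ |(Lam t ω : ℝ) - t|} → ω ∈ A ∪ B ∪ Cs := by
      filter_upwards [hae] with ω hω hmem
      obtain ⟨hω0, hωp⟩ := hω
      have hSdecomp : ∀ n : ℕ, S n ω = Xs n ω + Y 0 ω := by
        intro n
        rw [hXsdef, hS n ω, Finset.sum_range_succ' (fun i => Y i ω) n]
      have hXsmono : ∀ k l : ℕ, k ≤ l → Xs k ω ≤ Xs l ω := by
        intro k l hkl
        rw [hXsdef]
        exact Finset.sum_le_sum_of_subset_of_nonneg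
          (Finset.range_subset_range.2 hkl) (fun i _ _ => (hωp (i + 1) (by omega)).le)
      have hmem' : a ≤ |(Lam t ω : ℝ) - t| := by rw [hadef]; exact hmem
      rcases le_abs.1 hmem' with hcase | hcase
      · -- Lam large
        have hLam_big : t + a ≤ (Lam t ω : ℝ) := by linarith
        have hmlt : m < Lam t ω := by
          have h6 : (m : ℝ) < (Lam t ω : ℝ) := lt_of_lt_of_le hm_ub hLam_big
          exact_mod_cast h6
        have hSm : S m ω ≤ t := by
          by_contra hcon
          push_neg at hcon
          have hmem2 : m ∈ {n : ℕ | t < S n ω} := hcon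
          have h7 := Nat.sInf_le hmem2
          rw [← hLam t ω] at h7
          omega
        refine Or.inl (Or.inl ?_)
        rw [hAdef]
        have := hSdecomp m
        show Xs m ω ≤ t
        linarith
      · -- Lam small
        have hLam_small : (Lam t ω : ℝ) ≤ t - a := by linarith
        by_cases hne : {n : ℕ | t < S n ω}.Nonempty
        · have hkmem : Lam t ω ∈ {n : ℕ | t < S n ω} := by
            rw [hLam t ω]; exact Nat.sInf_mem hne
          have hk : t < S (Lam t ω) ω := hkmem
          have hkm' : Lam t ω ≤ m' := by rw [hm'def]; exact Nat.le_floor hLam_small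
          have hSm' : t < S m' ω := by
            have h1 := hXsmono (Lam t ω) m' hkm'
            have h2 := hSdecomp (Lam t ω)
            have h3 := hSdecomp m'
            linarith
          by_cases hB' : a / 2 ≤ Y 0 ω
          · refine Or.inl (Or.inr ?_)
            rw [hBdef]; exact hB'
          · refine Or.inr ?_
            rw [hCsdef]
            push_neg at hB'
            have := hSdecomp m'
            show t - a / 2 ≤ Xs m' ω
            linarith
        · refine Or.inl (Or.inl ?_)
          rw [hAdef]
          rw [Set.not_nonempty_iff_eq_empty] at hne
          have hSm : ¬ (t < S m ω) := by
            intro hcon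
            have h8 : m ∈ {n : ℕ | t < S n ω} := hcon
            rw [hne] at h8
            exact h8
          push_neg at hSm
          have := hSdecomp m
          show Xs m ω ≤ t
          linarith
    have hPsplit : P {ω | t ^ ((1 : ℝ) / 2 + ε) ≤ |(Lam t ω : ℝ) - t|} ≤ P A + P B + P Cs := by
      have h9 : P {ω | t ^ ((1 : ℝ) / 2 + ε) ≤ |(Lam t ω : ℝ) - t|} ≤ P (A ∪ B ∪ Cs) := by
        apply measure_mono_ae
        exact hsubset
      calc P {ω | t ^ ((1 : ℝ) / 2 + ε) ≤ |(Lam t ω : ℝ) - t|} ≤ P (A ∪ B ∪ Cs) := h9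
        _ ≤ P (A ∪ B) + P Cs := measure_union_le _ _
        _ ≤ P A + P B + P Cs := add_le_add_left (measure_union_le _ _) _
    -- bound each piece
    have hPA : (P A).toReal ≤ Real.exp κ * Real.exp (-B₀ * t ^ ε) := by
      rw [hAdef]
      refine le_trans (hChernL m lam t hlam0.le) ?_
      rw [← Real.exp_add, ← Real.exp_add]
      apply Real.exp_le_exp.2
      have hexpand : lam * t + (m : ℝ) * (-lam + CC * lam ^ 2) =
          lam * (t - (m : ℝ)) + CC * (lam ^ 2 * (m : ℝ)) := by ring
      rw [hexpand]
      have h1 : lam * (t - (m : ℝ)) ≤ lam * (1 - a) :=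
        mul_le_mul_of_nonneg_left (by linarith) hlam0.le
      have h2 : CC * (lam ^ 2 * (m : ℝ)) ≤ CC * (lam ^ 2 * (2 * t)) :=
        mul_le_mul_of_nonneg_left
          (mul_le_mul_of_nonneg_left (by linarith) (sq_nonneg lam)) hCC0
      have h3 : CC * (lam ^ 2 * (2 * t)) = 2 * CC * κ ^ 2 * t ^ (2 * ε) := by
        rw [show lam ^ 2 * (2 * t) = 2 * (lam ^ 2 * t) by ring, hlam_sq]; ring
      have h4 : lam * (1 - a) = lam - κ * t ^ (2 * ε) := by
        rw [mul_sub, mul_one, hlam_a]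
      have h5 : 2 * CC * κ ^ 2 * t ^ (2 * ε) ≤ (κ / 2) * t ^ (2 * ε) := by
        apply mul_le_mul_of_nonneg_right ?_ ht2ε0.le
        nlinarith only [hκCC, hκ, hCC0]
      have h6 : κ - (κ / 2) * t ^ (2 * ε) ≤ κ - (κ / 2) * t ^ ε := by
        linarith only [mul_nonneg hκ.le (sub_nonneg.2 ht2ε)]
      have h7 : -(κ / 2) * t ^ ε ≤ -B₀ * t ^ ε := by
        have h70 : (0:ℝ) ≤ κ / 2 - B₀ := by linarith only [hB₀κ, hκ.le]
        linarith only [mul_nonneg h70 htε0.le]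
      calc lam * (t - (m:ℝ)) + CC * (lam ^ 2 * (m:ℝ))
          ≤ (lam - κ * t ^ (2 * ε)) + (κ / 2) * t ^ (2 * ε) := by
            rw [← h4]; linarith
        _ ≤ κ - (κ / 2) * t ^ (2 * ε) := by linarith
        _ ≤ κ + -B₀ * t ^ ε := by linarith
    have hPB : (P B).toReal ≤ C0 * Real.exp (-B₀ * t ^ ε) := by
      rw [hBdef]
      refine le_trans (hChernD (a / 2)) ?_
      rw [mul_comm]
      apply mul_le_mul_of_nonneg_left ?_ hC00
      apply Real.exp_le_exp.2
      linarith only [mul_le_mul_of_nonneg_left hta hθ'.le,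
        mul_le_mul_of_nonneg_right hB₀θ' htε0.le]
    have hPC : (P Cs).toReal ≤ Real.exp (-B₀ * t ^ ε) := by
      rw [hCsdef]
      refine le_trans (hChernU m' lam (t - a / 2) hlam0.le (le_trans hlamκ hκθ)) ?_
      rw [← Real.exp_add]
      apply Real.exp_le_exp.2
      have hm'0 : (0:ℝ) ≤ (m' : ℝ) := Nat.cast_nonneg _
      have h1 : (m' : ℝ) * (lam + CC * lam ^ 2) ≤ (t - a) * lam + CC * (lam ^ 2 * t) := by
        have hc1 : (m' : ℝ) * lam ≤ (t - a) * lam :=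
          mul_le_mul_of_nonneg_right hm'_ub hlam0.le
        have hc2 : (m' : ℝ) * (CC * lam ^ 2) ≤ t * (CC * lam ^ 2) :=
          mul_le_mul_of_nonneg_right (by linarith)
            (mul_nonneg hCC0 (sq_nonneg lam))
        linarith only [hc1, hc2]
      have h3 : -(lam * a) / 2 + CC * (lam ^ 2 * t) =
          (-κ / 2 + CC * κ ^ 2) * t ^ (2 * ε) := by
        rw [hlam_a, hlam_sq]; ring
      have h4 : (-κ / 2 + CC * κ ^ 2) * t ^ (2 * ε) ≤ (-κ / 4) * t ^ (2 * ε) := by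
        apply mul_le_mul_of_nonneg_right ?_ ht2ε0.le
        nlinarith only [hκCC, hκ, hCC0]
      have h5 : (-κ / 4) * t ^ (2 * ε) ≤ -B₀ * t ^ ε := by
        have h50 : (0:ℝ) ≤ κ / 4 := by linarith only [hκ.le]
        linarith only [mul_nonneg h50 (sub_nonneg.2 ht2ε),
          mul_le_mul_of_nonneg_right hB₀κ htε0.le]
      calc -lam * (t - a / 2) + (m' : ℝ) * (lam + CC * lam ^ 2)
          ≤ -lam * (t - a / 2) + ((t - a) * lam + CC * (lam ^ 2 * t)) := by linarith
        _ = -(lam * a) / 2 + CC * (lam ^ 2 * t) := by ring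
        _ ≤ -B₀ * t ^ ε := by rw [h3]; linarith
    -- combine
    have hexpnn : (0:ℝ) ≤ Real.exp (-B₀ * t ^ ε) := (Real.exp_pos _).le
    have hconv : ∀ (s : Set Ω) (r : ℝ), (P s).toReal ≤ r → P s ≤ ENNReal.ofReal r := by
      intro s r h
      exact (ENNReal.le_ofReal_iff_toReal_le (measure_ne_top P s)
        (le_trans ENNReal.toReal_nonneg h)).2 h
    calc P {ω | t ^ ((1 : ℝ) / 2 + ε) ≤ |(Lam t ω : ℝ) - t|}
        ≤ P A + P B + P Cs := hPsplit
      _ ≤ ENNReal.ofReal (Real.exp κ * Real.exp (-B₀ * t ^ ε)) +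
            ENNReal.ofReal (C0 * Real.exp (-B₀ * t ^ ε)) +
            ENNReal.ofReal (Real.exp (-B₀ * t ^ ε)) :=
          add_le_add (add_le_add (hconv A _ hPA) (hconv B _ hPB)) (hconv Cs _ hPC)
      _ = ENNReal.ofReal (Real.exp κ * Real.exp (-B₀ * t ^ ε) +
            C0 * Real.exp (-B₀ * t ^ ε) + Real.exp (-B₀ * t ^ ε)) := by
          rw [← ENNReal.ofReal_add (mul_nonneg (Real.exp_pos κ).le hexpnn)
              (mul_nonneg hC00 hexpnn),
            ← ENNReal.ofReal_add
              (add_nonneg (mul_nonneg (Real.exp_pos κ).le hexpnn)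
                (mul_nonneg hC00 hexpnn)) hexpnn]
      _ = ENNReal.ofReal (A₀ * Real.exp (-B₀ * t ^ ε)) := by
          rw [hA₀def]; ring_nf
  -- conversion to the final form
  obtain ⟨T₀, hT₀def⟩ : ∃ T : ℝ, T = max 1 ((1 / B₀) ^ ((2:ℝ) / ε)) := ⟨_, rfl⟩
  have hT₀1 : 1 ≤ T₀ := by rw [hT₀def]; exact le_max_left _ _
  refine ⟨A₀ + Real.exp T₀, ε / 2, by linarith, ?_⟩
  intro t ht
  have ht0 : (0:ℝ) < t := by linarith
  rcases le_or_gt T₀ t with hcase | hcase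
  · -- large t
    have h1 : 1 / B₀ ≤ t ^ (ε / 2) := by
      have h2 : (1 / B₀) ^ ((2:ℝ) / ε) ≤ t := by
        refine le_trans ?_ hcase
        rw [hT₀def]
        exact le_max_right 1 ((1 / B₀) ^ ((2:ℝ) / ε))
      have h3 : ((1 / B₀) ^ ((2:ℝ) / ε)) ^ (ε / 2) ≤ t ^ (ε / 2) :=
        Real.rpow_le_rpow (Real.rpow_nonneg (by positivity) _) h2 (by linarith)
      rwa [← Real.rpow_mul (by positivity : (0:ℝ) ≤ 1 / B₀),
        show (2:ℝ) / ε * (ε / 2) = 1 by field_simp, Real.rpow_one] at h3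
    have h4 : t ^ (ε / 2) ≤ B₀ * t ^ ε := by
      have h5 : t ^ ε = t ^ (ε / 2) * t ^ (ε / 2) := by
        rw [← Real.rpow_add ht0]; ring_nf
      have h6 : (0:ℝ) < t ^ (ε / 2) := Real.rpow_pos_of_pos ht0 _
      have h7 : 1 ≤ B₀ * t ^ (ε / 2) := by
        rw [div_le_iff₀ hB₀] at h1; linarith
      calc t ^ (ε / 2) = 1 * t ^ (ε / 2) := (one_mul _).symm
        _ ≤ (B₀ * t ^ (ε / 2)) * t ^ (ε / 2) :=
            mul_le_mul_of_nonneg_right h7 h6.le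
        _ = B₀ * t ^ ε := by rw [h5]; ring
    refine le_trans (key t ht) (ENNReal.ofReal_le_ofReal ?_)
    have h8 : Real.exp (-B₀ * t ^ ε) ≤ Real.exp (-t ^ (ε / 2)) :=
      Real.exp_le_exp.2 (by linarith)
    calc A₀ * Real.exp (-B₀ * t ^ ε) ≤ A₀ * Real.exp (-t ^ (ε / 2)) :=
          mul_le_mul_of_nonneg_left h8 hA₀.le
      _ ≤ (A₀ + Real.exp T₀) * Real.exp (-t ^ (ε / 2)) := by
          linarith only [mul_nonneg (Real.exp_pos T₀).le
            (Real.exp_pos (-t ^ (ε / 2))).le]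
  · -- small t
    have h1 : t ^ (ε / 2) ≤ T₀ := by
      calc t ^ (ε / 2) ≤ t ^ (1:ℝ) :=
            Real.rpow_le_rpow_of_exponent_le ht (by linarith)
        _ = t := Real.rpow_one t
        _ ≤ T₀ := hcase.le
    have h2 : (1:ℝ) ≤ (A₀ + Real.exp T₀) * Real.exp (-t ^ (ε / 2)) := by
      have h3 : Real.exp T₀ * Real.exp (-t ^ (ε / 2)) = Real.exp (T₀ - t ^ (ε / 2)) := by
        rw [← Real.exp_add]; ring_nf
      have h4 : (1:ℝ) ≤ Real.exp (T₀ - t ^ (ε / 2)) := by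
        rw [← Real.exp_zero]; exact Real.exp_le_exp.2 (by linarith)
      linarith only [h3, h4,
        mul_nonneg hA₀.le (Real.exp_pos (-t ^ (ε / 2))).le]
    calc P {ω | t ^ ((1 : ℝ) / 2 + ε) ≤ |(Lam t ω : ℝ) - t|} ≤ 1 := prob_le_one
      _ = ENNReal.ofReal 1 := ENNReal.ofReal_one.symm
      _ ≤ ENNReal.ofReal ((A₀ + Real.exp T₀) * Real.exp (-t ^ (ε / 2))) :=
        ENNReal.ofReal_le_ofReal h2
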